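/- For n ≥ 1, if there is an injection from Fin n × A to Fin n × B and an injection from B to A, then there is a bijection between A and B. -/

import Mathlib

open Cardinal in
lemma cancel_nat_mul_le (n : ℕ) (hn : n ≠ 0) (a b : Cardinal) (h : (n : Cardinal) * a ≤ n * b) :
    a ≤ b := by
  rcases lt_or_ge b ℵ₀ with hb | hb
  · have ha : a < ℵ₀ := by
      by_contra ha
      push_neg at ha
      have h1 : a ≤ n * a := by
        conv_lhs => rw [← one_mul a]
        exact mul_le_mul_left (by exact_mod_cast Nat.one_le_iff_ne_zero.mpr hn) a
      have h2 : (n : Cardinal) * b < ℵ₀ := mul_lt_aleph0 (nat_lt_aleph0 n) hb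
      exact absurd ((h1.trans h).trans_lt h2) (not_lt.mpr ha)
    obtain ⟨x, rfl⟩ := Cardinal.lt_aleph0.mp ha
    obtain ⟨y, rfl⟩ := Cardinal.lt_aleph0.mp hb
    rw [← Nat.cast_mul, ← Nat.cast_mul, Nat.cast_le] at h
    exact_mod_cast Nat.le_of_mul_le_mul_left h (Nat.pos_of_ne_zero hn)
  · have hnb : (n : Cardinal) * b = b :=
      Cardinal.mul_eq_right hb ((nat_lt_aleph0 n).le.trans hb)
        (by exact_mod_cast hn)
    have h1 : a ≤ n * a := by
      conv_lhs => rw [← one_mul a]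
      exact mul_le_mul_left (by exact_mod_cast Nat.one_le_iff_ne_zero.mpr hn) a
    calc a ≤ n * a := h1
    _ ≤ n * b := h
    _ = b := hnb

universe u v
lemma stmt_13_aux (n : ℕ) (hn : 1 ≤ n) (A : Type u) (B : Type v)
    (f : Fin n × A → Fin n × B) (hf : Function.Injective f)
    (g : B → A) (hg : Function.Injective g) :
    Nonempty (A ≃ B) := by
  have h1 : Cardinal.lift.{v} (Cardinal.mk (Fin n × A)) ≤
      Cardinal.lift.{u} (Cardinal.mk (Fin n × B)) :=
    Cardinal.lift_mk_le'.mpr ⟨⟨f, hf⟩⟩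
  have h2 : Cardinal.lift.{u} (Cardinal.mk B) ≤ Cardinal.lift.{v} (Cardinal.mk A) :=
    Cardinal.lift_mk_le'.mpr ⟨⟨g, hg⟩⟩
  simp only [Cardinal.mk_prod, Cardinal.lift_mul, Cardinal.mk_fin, Cardinal.lift_natCast,
    Cardinal.lift_lift, Cardinal.lift_id] at h1
  have h3 := cancel_nat_mul_le n (by omega) _ _ h1
  have h4 : Cardinal.lift.{v} (Cardinal.mk A) = Cardinal.lift.{u} (Cardinal.mk B) := by
    apply le_antisymm
    · exact_mod_cast h3
    · exact h2
  exact Cardinal.lift_mk_eq'.mp h4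

theorem stmt_13 (n : ℕ) (hn : 1 ≤ n) (A B : Type*)
    (f : Fin n × A → Fin n × B) (hf : Function.Injective f)
    (g : B → A) (hg : Function.Injective g) :
    Nonempty (A ≃ B) :=
  stmt_13_aux n hn A B f hf g hg
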